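/- arXiv:1111.7285 — 5 statements merged into one kernel-verified Lean document; each statement's English description precedes it below -/
import Mathlib

section
/- Let A be a commutative ℚ-algebra. The A-algebra homomorphism from A[X] to the subalgebra of A[[ε₁, ε₂, …]]/(ε_i²) generated by the elementary symmetric series, determined by X ↦ e₁, sends X^n to n! · e_n; hence it extends to an isomorphism from the divided-power polynomial algebra onto A⟨e₁, e₂, …⟩, and e_n = e₁^n / n! for all n. -/
open scoped Classical

/-- The `i`-th elementary symmetric power series
`e_i = Σ_{j₁ < ⋯ < j_i} ε_{j₁}⋯ε_{j_i}` in the variables `ε₀, ε₁, …`: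
its coefficient at a monomial is `1` exactly on squarefree monomials in `i` distinct
variables, and `0` otherwise. -/
noncomputable def elemSymSeries (A : Type*) [CommRing A] (i : ℕ) : MvPowerSeries ℕ A :=
  fun m => if (∀ n, m n ≤ 1) ∧ m.support.card = i then (1 : A) else 0

/-- The (closed) ideal of `A[[ε₀, ε₁, …]]` consisting of the series supported on
non-squarefree monomials; quotienting by it imposes the relations `ε_i² = 0`. -/
noncomputable def squaresIdeal (A : Type*) [CommRing A] : Ideal (MvPowerSeries ℕ A) where
  carrier := {f | ∀ m : ℕ →₀ ℕ, (∀ n, m n ≤ 1) → MvPowerSeries.coeff (R := A) m f = 0}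
  add_mem' := by
    intro a b ha hb m hm
    rw [map_add, ha m hm, hb m hm, add_zero]
  zero_mem' := by
    intro m hm
    exact map_zero _
  smul_mem' := by
    intro c f hf m hm
    rw [smul_eq_mul, MvPowerSeries.coeff_mul]
    refine Finset.sum_eq_zero fun p hp => ?_
    have hsum : p.1 + p.2 = m := Finset.HasAntidiagonal.mem_antidiagonal.mp hp
    have h2 : ∀ n, p.2 n ≤ 1 := by
      intro n
      have h1 : p.1 n + p.2 n = m n := by rw [← hsum]; rfl
      have := hm n
      omega
    rw [hf p.2 h2, mul_zero]

section Aux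

variable {A : Type*} [CommRing A]

lemma coeff_elemSym (i : ℕ) (m : ℕ →₀ ℕ) :
    MvPowerSeries.coeff (R := A) m (elemSymSeries A i)
      = if (∀ n, m n ≤ 1) ∧ m.support.card = i then (1 : A) else 0 := rfl

lemma elemSym_zero : elemSymSeries A 0 = 1 := by
  apply MvPowerSeries.ext
  intro m
  rw [coeff_elemSym, MvPowerSeries.coeff_one]
  by_cases hm : m = 0
  · subst hm
    simp
  · rw [if_neg hm, if_neg]
    rintro ⟨-, hc⟩
    exact hm (Finsupp.support_eq_empty.mp (Finset.card_eq_zero.mp hc))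

lemma key_mul (n : ℕ) (m : ℕ →₀ ℕ) (hm : ∀ k, m k ≤ 1) :
    MvPowerSeries.coeff (R := A) m (elemSymSeries A 1 * elemSymSeries A n)
      = (n + 1) • MvPowerSeries.coeff (R := A) m (elemSymSeries A (n + 1)) := by
  rw [MvPowerSeries.coeff_mul]
  have hterm : ∀ p ∈ Finset.HasAntidiagonal.antidiagonal m,
      MvPowerSeries.coeff (R := A) p.1 (elemSymSeries A 1) *
        MvPowerSeries.coeff (R := A) p.2 (elemSymSeries A n)
        = if p.1.support.card = 1 ∧ p.2.support.card = n then (1 : A) else 0 := by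
    intro p hp
    have hsum : p.1 + p.2 = m := Finset.HasAntidiagonal.mem_antidiagonal.mp hp
    have hadd : ∀ k, p.1 k + p.2 k = m k := by intro k; rw [← hsum]; rfl
    have h1 : ∀ k, p.1 k ≤ 1 := fun k => by have := hm k; have := hadd k; omega
    have h2 : ∀ k, p.2 k ≤ 1 := fun k => by have := hm k; have := hadd k; omega
    rw [coeff_elemSym, coeff_elemSym]
    simp only [h1, h2, true_and]
    split_ifs <;> simp_all
  rw [Finset.sum_congr rfl hterm, Finset.sum_boole]
  rw [coeff_elemSym, if_congr (and_iff_right hm) rfl rfl]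
  by_cases hcard : m.support.card = n + 1
  · rw [if_pos hcard]
    have hc : (Finset.filter
        (fun p : (ℕ →₀ ℕ) × (ℕ →₀ ℕ) => p.1.support.card = 1 ∧ p.2.support.card = n)
        (Finset.HasAntidiagonal.antidiagonal m)).card = m.support.card := by
      symm
      apply Finset.card_bij (fun x _ => (Finsupp.single x 1, m - Finsupp.single x 1))
      · intro x hx
        have hx1 : m x = 1 := by
          have := hm x
          have := Finsupp.mem_support_iff.mp hx
          omega
        have hsub : ∀ k, (m - Finsupp.single x 1 : ℕ →₀ ℕ) k = if k = x then 0 else m k := by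
          intro k
          rw [Finsupp.tsub_apply]
          rcases eq_or_ne k x with rfl | hk
          · simp [hx1]
          · simp [Finsupp.single_eq_of_ne (Ne.symm hk), hk]
        have hsupp : (m - Finsupp.single x 1).support = m.support.erase x := by
          ext k
          rw [Finsupp.mem_support_iff, hsub k, Finset.mem_erase, Finsupp.mem_support_iff]
          rcases eq_or_ne k x with rfl | hk
          · simp
          · simp [hk]
        rw [Finset.mem_filter]
        refine ⟨Finset.HasAntidiagonal.mem_antidiagonal.mpr ?_, ?_, ?_⟩
        · ext k
          rw [Finsupp.add_apply, hsub k]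
          rcases eq_or_ne k x with rfl | hk
          · simp [hx1]
          · simp [hk, Finsupp.single_eq_of_ne (Ne.symm hk)]
        · simp [Finsupp.support_single_ne_zero x (one_ne_zero)]
        · rw [hsupp, Finset.card_erase_of_mem hx, hcard]
          omega
      · intro a ha b hb hab
        exact (Finsupp.single_left_inj one_ne_zero).mp (congrArg Prod.fst hab)
      · rintro ⟨p1, p2⟩ hp
        rw [Finset.mem_filter] at hp
        obtain ⟨hanti, hc1, hc2⟩ := hp
        have hsum : p1 + p2 = m := Finset.HasAntidiagonal.mem_antidiagonal.mp hanti
        have hadd : ∀ k, p1 k + p2 k = m k := by intro k; rw [← hsum]; rfl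
        obtain ⟨a, b, hb, rfl⟩ := Finsupp.card_support_eq_one'.mp hc1
        have hb1 : b = 1 := by
          have h1 := hadd a
          have h2 := hm a
          rw [Finsupp.single_eq_same] at h1
          omega
        subst hb1
        have hma : m a = 1 := by
          have h1 := hadd a
          have h2 := hm a
          rw [Finsupp.single_eq_same] at h1
          omega
        refine ⟨a, ?_, ?_⟩
        · exact Finsupp.mem_support_iff.mpr (by omega)
        · refine Prod.ext rfl ?_
          show m - Finsupp.single a 1 = p2
          ext k
          have hk := hadd k
          rw [Finsupp.tsub_apply, ← hk]
          omega
    rw [hc, hcard, nsmul_eq_mul, mul_one]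
  · rw [if_neg hcard, smul_zero]
    have hempty : Finset.filter
        (fun p : (ℕ →₀ ℕ) × (ℕ →₀ ℕ) => p.1.support.card = 1 ∧ p.2.support.card = n)
        (Finset.HasAntidiagonal.antidiagonal m) = ∅ := by
      rw [Finset.filter_eq_empty_iff]
      rintro ⟨p1, p2⟩ hp ⟨hc1, hc2⟩
      have hsum : p1 + p2 = m := Finset.HasAntidiagonal.mem_antidiagonal.mp hp
      have hadd : ∀ k, p1 k + p2 k = m k := by intro k; rw [← hsum]; rfl
      have hdisj : Disjoint p1.support p2.support := by
        rw [Finset.disjoint_left]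
        intro k hk1 hk2
        have := hm k; have := hadd k
        have := Finsupp.mem_support_iff.mp hk1
        have := Finsupp.mem_support_iff.mp hk2
        omega
      have : m.support = p1.support ∪ p2.support := by
        rw [← hsum]; exact Finsupp.support_add_eq hdisj
      rw [this, Finset.card_union_of_disjoint hdisj, hc1, hc2] at hcard
      omega
    rw [hempty]
    simp

lemma coeff_pow (i : ℕ) (m : ℕ →₀ ℕ) (hm : ∀ k, m k ≤ 1) :
    MvPowerSeries.coeff (R := A) m ((elemSymSeries A 1) ^ i)
      = i.factorial • MvPowerSeries.coeff (R := A) m (elemSymSeries A i) := by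
  induction i generalizing m with
  | zero => simp [elemSym_zero]
  | succ i ih =>
    rw [pow_succ, mul_comm, MvPowerSeries.coeff_mul]
    have : ∀ p ∈ Finset.HasAntidiagonal.antidiagonal m,
        MvPowerSeries.coeff (R := A) p.1 (elemSymSeries A 1) *
          MvPowerSeries.coeff (R := A) p.2 ((elemSymSeries A 1) ^ i)
          = i.factorial • (MvPowerSeries.coeff (R := A) p.1 (elemSymSeries A 1) *
              MvPowerSeries.coeff (R := A) p.2 (elemSymSeries A i)) := by
      intro p hp
      have hsum : p.1 + p.2 = m := Finset.HasAntidiagonal.mem_antidiagonal.mp hp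
      have hadd : ∀ k, p.1 k + p.2 k = m k := by intro k; rw [← hsum]; rfl
      have h2 : ∀ k, p.2 k ≤ 1 := fun k => by have := hm k; have := hadd k; omega
      rw [ih p.2 h2, mul_smul_comm]
    rw [Finset.sum_congr rfl this, ← Finset.smul_sum, ← MvPowerSeries.coeff_mul,
      key_mul i m hm, smul_smul, Nat.factorial_succ]
    ring_nf

lemma pow_sub_mem (i : ℕ) :
    (elemSymSeries A 1) ^ i - i.factorial • elemSymSeries A i ∈ squaresIdeal A := by
  show ∀ m : ℕ →₀ ℕ, (∀ n, m n ≤ 1) → MvPowerSeries.coeff (R := A) m _ = 0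
  intro m hm
  rw [map_sub, coeff_pow i m hm, map_nsmul, sub_self]

end Aux

noncomputable def mN (n : ℕ) : ℕ →₀ ℕ := ∑ j ∈ Finset.range n, Finsupp.single j 1

lemma mN_apply (n k : ℕ) : mN n k = if k < n then 1 else 0 := by
  rw [mN, Finsupp.finset_sum_apply]
  simp [Finsupp.single_apply]

lemma mN_le (n : ℕ) : ∀ k, mN n k ≤ 1 := by
  intro k
  rw [mN_apply]
  split <;> simp

lemma mN_card (n : ℕ) : (mN n).support.card = n := by
  have : (mN n).support = Finset.range n := by
    ext k
    rw [Finsupp.mem_support_iff, mN_apply, Finset.mem_range]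
    split <;> simp_all
  rw [this, Finset.card_range]

lemma nat_mul_cancel {A : Type*} [CommRing A] [Algebra ℚ A] (n : ℕ) (hn : n ≠ 0) (a : A)
    (h : a * (n : A) = 0) : a = 0 := by
  have h2 : (n : ℚ) • a = 0 := by
    rw [Algebra.smul_def, map_natCast, mul_comm]; exact h
  have h3 := congrArg (fun x => ((n : ℚ))⁻¹ • x) h2
  simpa [smul_smul, inv_mul_cancel₀ (Nat.cast_ne_zero.mpr hn : (n:ℚ) ≠ 0)] using h3

/-- Let `A` be a commutative `ℚ`-algebra and `R = A[[ε₁, ε₂, …]]/(ε_i²)`.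
The `A`-algebra homomorphism `A[X] → R` determined by `X ↦ e₁` sends `Xⁿ` to `n! · e_n`;
hence it is injective with range the subalgebra `A⟨e₁, e₂, …⟩` generated by the elementary
symmetric series (so it extends to an isomorphism from the divided-power polynomial algebra
onto `A⟨e₁, e₂, …⟩`), and `e_n = e₁ⁿ / n!` for all `n`. -/
theorem polynomial_aeval_elemSymSeries (A : Type*) [CommRing A] [Algebra ℚ A] :
    (∀ n : ℕ,
      Polynomial.aeval (Ideal.Quotient.mk (squaresIdeal A) (elemSymSeries A 1))
          ((Polynomial.X : Polynomial A) ^ n) =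
        n.factorial • Ideal.Quotient.mk (squaresIdeal A) (elemSymSeries A n)) ∧
    Function.Injective
      (Polynomial.aeval (Ideal.Quotient.mk (squaresIdeal A) (elemSymSeries A 1)) :
        Polynomial A →ₐ[A] MvPowerSeries ℕ A ⧸ squaresIdeal A) ∧
    (Polynomial.aeval (Ideal.Quotient.mk (squaresIdeal A) (elemSymSeries A 1)) :
        Polynomial A →ₐ[A] MvPowerSeries ℕ A ⧸ squaresIdeal A).range =
      Algebra.adjoin A
        (Set.range fun n : ℕ =>
          Ideal.Quotient.mk (squaresIdeal A) (elemSymSeries A (n + 1))) := by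
  set I := squaresIdeal A
  set y := Ideal.Quotient.mk I (elemSymSeries A 1) with hy
  have part1 : ∀ n : ℕ, Polynomial.aeval y ((Polynomial.X : Polynomial A) ^ n)
      = n.factorial • Ideal.Quotient.mk I (elemSymSeries A n) := by
    intro n
    rw [map_pow, Polynomial.aeval_X, hy, ← map_pow, ← map_nsmul]
    rw [Ideal.Quotient.mk_eq_mk_iff_sub_mem]
    exact pow_sub_mem n
  refine ⟨part1, ?_, ?_⟩
  · rw [injective_iff_map_eq_zero]
    intro p hp
    have hmk0 : Ideal.Quotient.mk I (Polynomial.aeval (elemSymSeries A 1) p) = 0 := by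
      rw [← Ideal.Quotient.mkₐ_eq_mk (R₁ := A) I, ← Polynomial.aeval_algHom_apply,
        Ideal.Quotient.mkₐ_eq_mk (R₁ := A) I]
      exact hp
    have hmem : Polynomial.aeval (elemSymSeries A 1) p ∈ I :=
      Ideal.Quotient.eq_zero_iff_mem.mp hmk0
    ext n
    rw [Polynomial.coeff_zero]
    have h0 := (show ∀ m : ℕ →₀ ℕ, (∀ n, m n ≤ 1) → MvPowerSeries.coeff (R := A) m (Polynomial.aeval (elemSymSeries A 1) p) = 0 from hmem) (mN n) (mN_le n)
    rw [Polynomial.aeval_eq_sum_range, map_sum] at h0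
    have hterm : ∀ i ∈ Finset.range (p.natDegree + 1),
        MvPowerSeries.coeff (R := A) (mN n) (p.coeff i • (elemSymSeries A 1) ^ i)
          = if n = i then p.coeff i * (i.factorial : A) else 0 := by
      intro i _
      rw [map_smul, coeff_pow i _ (mN_le n), coeff_elemSym]
      by_cases h : n = i
      · subst h
        rw [if_pos ⟨mN_le n, mN_card n⟩, if_pos rfl]
        simp [nsmul_eq_mul, smul_eq_mul]
      · rw [if_neg, if_neg h]
        · simp
        · rintro ⟨-, hc⟩
          exact h (by rw [← mN_card n, hc])
    rw [Finset.sum_congr rfl hterm, Finset.sum_ite_eq] at h0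
    by_cases hn : n ≤ p.natDegree
    · rw [if_pos (Finset.mem_range.mpr (by omega))] at h0
      exact nat_mul_cancel _ (Nat.factorial_ne_zero n) _ h0
    · exact Polynomial.coeff_eq_zero_of_natDegree_lt (by omega)
  · rw [← Algebra.adjoin_singleton_eq_range_aeval]
    apply le_antisymm
    · refine Algebra.adjoin_le ?_
      intro z hz
      rw [Set.mem_singleton_iff] at hz
      subst hz
      exact Algebra.subset_adjoin ⟨0, rfl⟩
    · refine Algebra.adjoin_le ?_
      rintro z ⟨n, rfl⟩
      have hpow : y ^ (n + 1)
          = (n + 1).factorial • Ideal.Quotient.mk I (elemSymSeries A (n + 1)) := by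
        have := part1 (n + 1)
        rwa [map_pow, Polynomial.aeval_X] at this
      have hfac : ((n + 1).factorial : ℚ) ≠ 0 :=
        Nat.cast_ne_zero.mpr (Nat.factorial_ne_zero (n + 1))
      have hz : Ideal.Quotient.mk I (elemSymSeries A (n + 1))
          = (((n + 1).factorial : ℚ))⁻¹ • y ^ (n + 1) := by
        rw [hpow, ← Nat.cast_smul_eq_nsmul ℚ, smul_smul, inv_mul_cancel₀ hfac, one_smul]
      show Ideal.Quotient.mk I (elemSymSeries A (n + 1)) ∈ (Algebra.adjoin A {y} : Subalgebra A _)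
      rw [hz]
      have hy' : y ^ (n + 1) ∈ Algebra.adjoin A {y} :=
        pow_mem (Algebra.subset_adjoin (Set.mem_singleton y)) _
      rw [← algebraMap_smul A ((((n + 1).factorial : ℚ))⁻¹)
        (y ^ (n + 1) : MvPowerSeries ℕ A ⧸ I)]
      exact Subalgebra.smul_mem _ hy' _
end

section
/- Let k be a field with an iterative Hasse–Schmidt derivation (∂_i)_{i ≥ 0} (∂_0 = id, ∂_n(ab) = Σ_{i≤n} ∂_i(a)∂_{n−i}(b), ∂_i∂_j = C(i+j,i)∂_{i+j}) and a field automorphism σ commuting with every ∂_i. Let M be a difference module over (k, σ). For k ≥ 0 define τ_k M as the k-vector space generated by symbols ∂_i m (0 ≤ i ≤ k, m ∈ M) subject to ∂_i(m₁+m₂) = ∂_i m₁ + ∂_i m₂ and ∂_i(am) = Σ_{j=0}^i ∂_j(a)·∂_{i−j}m. Then the rule x·(∂_i m) = ∂_{i−1} m (with ∂_{−1}m = 0) defines on τ_k M the structure of a module over E_k = k[x]/(x^{k+1}), and the rule σ(∂_i m) = ∂_i(σ_M m) defines a well-defined additive bijection of τ_k M compatible with the E_k-action twisted by σ on coefficients.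 -/
open Finsupp

/-- The defining relations of the prolongation `τ_n M` of a module `M` over a field `K`
with Hasse–Schmidt derivation `δ`: the symbol `(i, m)` stands for `∂_i m`, the relations
are `∂_i (m₁ + m₂) = ∂_i m₁ + ∂_i m₂`, `∂_i (a • m) = Σ_{j ≤ i} ∂_j(a) · ∂_{i-j} m`
(for `i ≤ n`), and `∂_i m = 0` for `i > n`. -/
noncomputable def tauRel (K M : Type*) [Field K] [AddCommGroup M] [Module K M]
    (δ : ℕ → K → K) (n : ℕ) : Submodule K ((ℕ × M) →₀ K) :=
  Submodule.span K
    ({v | ∃ (i : ℕ) (m₁ m₂ : M), i ≤ n ∧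
        v = single (i, m₁ + m₂) (1 : K) - single (i, m₁) 1 - single (i, m₂) 1} ∪
     {v | ∃ (i : ℕ) (a : K) (m : M), i ≤ n ∧
        v = single (i, a • m) (1 : K) -
          ∑ j ∈ Finset.range (i + 1), single (i - j, m) (δ j a)} ∪
     {v | ∃ (i : ℕ) (m : M), n < i ∧ v = single (i, m) (1 : K)})

/-- The class of the generator `∂_i m` in `τ_n M`. -/
noncomputable def tauGen (K M : Type*) [Field K] [AddCommGroup M] [Module K M]
    (δ : ℕ → K → K) (n : ℕ) (i : ℕ) (m : M) :
    ((ℕ × M) →₀ K) ⧸ tauRel K M δ n :=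
  Submodule.Quotient.mk (single (i, m) (1 : K))

set_option linter.unusedSectionVars false
section
variable {K M : Type*} [Field K] [AddCommGroup M] [Module K M]

noncomputable def shiftMap (n : ℕ) : ((ℕ × M) →₀ K) →ₗ[K] ((ℕ × M) →₀ K) :=
  Finsupp.lsum ℕ fun p => if p.1 = 0 ∨ n < p.1 then 0 else Finsupp.lsingle (p.1 - 1, p.2)

lemma shiftMap_single (n i : ℕ) (m : M) (c : K) :
    shiftMap n (single (i, m) c) =
      if i = 0 ∨ n < i then 0 else single (i - 1, m) c := by
  rw [shiftMap, Finsupp.lsum_single]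
  split_ifs with h <;> simp

noncomputable def semiMap (σ : K ≃+* K) (σM : M ≃+ M) :
    ((ℕ × M) →₀ K) ≃+ ((ℕ × M) →₀ K) :=
  (Finsupp.mapRange.addEquiv (σ.toAddEquiv : K ≃+ K)).trans
    (Finsupp.domCongr (Equiv.prodCongr (Equiv.refl ℕ) σM.toEquiv))

lemma semiMap_single (σ : K ≃+* K) (σM : M ≃+ M) (i : ℕ) (m : M) (c : K) :
    semiMap σ σM (single (i, m) c) = single (i, σM m) (σ c) := by
  simp [semiMap]

lemma semiMap_smul (σ : K ≃+* K) (σM : M ≃+ M) (a : K) (v : (ℕ × M) →₀ K) :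
    semiMap σ σM (a • v) = σ a • semiMap σ σM v := by
  induction v using Finsupp.induction_linear with
  | zero => simp
  | add f g hf hg => rw [smul_add, map_add, hf, hg, map_add, smul_add]
  | single p c =>
      obtain ⟨i, m⟩ := p
      rw [smul_single, semiMap_single, semiMap_single, smul_single, smul_eq_mul, smul_eq_mul, map_mul]

lemma semiMap_symm_comp (σ : K ≃+* K) (σM : M ≃+ M) (v : (ℕ × M) →₀ K) :
    semiMap σ.symm σM.symm (semiMap σ σM v) = v := by
  induction v using Finsupp.induction_linear with
  | zero => simp
  | add f g hf hg => rw [map_add, map_add, hf, hg]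
  | single p c =>
      obtain ⟨i, m⟩ := p
      rw [semiMap_single, semiMap_single, AddEquiv.symm_apply_apply,
        RingEquiv.symm_apply_apply]

lemma semiMap_shiftMap_comm (σ : K ≃+* K) (σM : M ≃+ M) (n : ℕ) (v : (ℕ × M) →₀ K) :
    semiMap σ σM (shiftMap n v) = shiftMap n (semiMap σ σM v) := by
  induction v using Finsupp.induction_linear with
  | zero => simp
  | add f g hf hg => simp [map_add, hf, hg]
  | single p c =>
      obtain ⟨i, m⟩ := p
      rw [shiftMap_single, semiMap_single, shiftMap_single]
      split_ifs with h
      · simp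
      · rw [semiMap_single]

noncomputable def semiLin (σ : K ≃+* K) (σM : M ≃+ M) :
    ((ℕ × M) →₀ K) →ₛₗ[(σ : K →+* K)] ((ℕ × M) →₀ K) where
  toFun := semiMap σ σM
  map_add' := map_add _
  map_smul' := semiMap_smul σ σM

lemma shiftMap_mem (δ : ℕ → K → K) (n : ℕ) :
    tauRel K M δ n ≤ (tauRel K M δ n).comap (shiftMap n) := by
  conv_lhs => rw [tauRel]
  rw [Submodule.span_le]
  rintro v ((⟨i, m₁, m₂, hi, rfl⟩ | ⟨i, a, m, hi, rfl⟩) | ⟨i, m, hi, rfl⟩) <;>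
    simp only [Submodule.mem_comap, SetLike.mem_coe, map_sub, map_sum, shiftMap_single]
  · rcases i with _ | s
    · simp
    · have hc : ¬ (s + 1 = 0 ∨ n < s + 1) := by omega
      rw [if_neg hc, if_neg hc, if_neg hc]
      apply Submodule.subset_span
      left; left
      exact ⟨s, m₁, m₂, by omega, by norm_num⟩
  · rcases i with _ | s
    · simp
    · have hc : ¬ (s + 1 = 0 ∨ n < s + 1) := by omega
      rw [if_neg hc, Finset.sum_range_succ, if_pos (by omega), add_zero]
      have hsum : ∀ j ∈ Finset.range (s + 1),
          (if s + 1 - j = 0 ∨ n < s + 1 - j then 0 else single (s + 1 - j - 1, m) (δ j a))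
            = single (s - j, m) (δ j a) := by
        intro j hj
        rw [Finset.mem_range] at hj
        rw [if_neg (by omega)]
        congr 2
        omega
      rw [Finset.sum_congr rfl hsum]
      apply Submodule.subset_span
      left; right
      exact ⟨s, a, m, by omega, by norm_num⟩
  · rw [if_pos (by omega)]
    exact Submodule.zero_mem _

lemma semiLin_mem (δ : ℕ → K → K) (σ : K ≃+* K) (hσδ : ∀ i a, σ (δ i a) = δ i (σ a))
    (σM : M ≃+ M) (hσM : ∀ (a : K) (m : M), σM (a • m) = σ a • σM m) (n : ℕ) :
    tauRel K M δ n ≤ (tauRel K M δ n).comap (semiLin σ σM) := by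
  conv_lhs => rw [tauRel]
  rw [Submodule.span_le]
  have hap : ∀ v, semiLin σ σM v = semiMap σ σM v := fun _ => rfl
  rintro v ((⟨i, m₁, m₂, hi, rfl⟩ | ⟨i, a, m, hi, rfl⟩) | ⟨i, m, hi, rfl⟩) <;>
    simp only [Submodule.mem_comap, SetLike.mem_coe, map_sub, map_sum, hap,
      semiMap_single, map_one]
  · apply Submodule.subset_span
    left; left
    exact ⟨i, σM m₁, σM m₂, hi, by rw [map_add]⟩
  · apply Submodule.subset_span
    left; right
    refine ⟨i, σ a, σM m, hi, ?_⟩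
    rw [hσM]
    congr 1
    refine Finset.sum_congr rfl fun j _ => ?_
    rw [hσδ]
  · apply Submodule.subset_span
    right
    exact ⟨i, σM m, hi, rfl⟩

end

/-- Let `(K, σ, (∂_i))` be an iterative difference–Hasse–Schmidt field and
`(M, σM)` a difference module over `(K, σ)`.  Then on the prolongation
`τ_n M = ⟨∂_i m : i ≤ n, m ∈ M⟩` the rule `x • ∂_i m = ∂_{i-1} m` (with `∂_{-1} m = 0`)
is a well-defined `K`-linear endomorphism `X` with `X^{n+1} = 0` (so `τ_n M` is a module
over `E_n = K[x]/(x^{n+1})`), and `σ(∂_i m) = ∂_i (σM m)` is a well-defined additive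
bijection, `σ`-semilinear over `K` and commuting with the `E_n`-action. -/
theorem tau_module_and_difference_structure
    (K M : Type*) [Field K] [AddCommGroup M] [Module K M] [FiniteDimensional K M]
    (δ : ℕ → K → K)
    (h0 : ∀ a, δ 0 a = a)
    (hadd : ∀ i a b, δ i (a + b) = δ i a + δ i b)
    (hmul : ∀ i a b, δ i (a * b) = ∑ j ∈ Finset.range (i + 1), δ j a * δ (i - j) b)
    (hiter : ∀ i j a, δ i (δ j a) = ((i + j).choose i : K) * δ (i + j) a)
    (σ : K ≃+* K) (hσδ : ∀ i a, σ (δ i a) = δ i (σ a))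
    (σM : M ≃+ M) (hσM : ∀ (a : K) (m : M), σM (a • m) = σ a • σM m)
    (n : ℕ) :
    ∃ (X : Module.End K (((ℕ × M) →₀ K) ⧸ tauRel K M δ n))
      (S : (((ℕ × M) →₀ K) ⧸ tauRel K M δ n) ≃+ (((ℕ × M) →₀ K) ⧸ tauRel K M δ n)),
      (∀ m : M, X (tauGen K M δ n 0 m) = 0) ∧
      (∀ i : ℕ, i < n → ∀ m : M, X (tauGen K M δ n (i + 1) m) = tauGen K M δ n i m) ∧
      X ^ (n + 1) = 0 ∧
      (∀ (i : ℕ) (m : M), S (tauGen K M δ n i m) = tauGen K M δ n i (σM m)) ∧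
      (∀ (a : K) v, S (a • v) = σ a • S v) ∧
      (∀ v, S (X v) = X (S v)) := by
  haveI : RingHomSurjective (σ : K →+* K) := ⟨σ.surjective⟩
  haveI : RingHomSurjective (σ.symm : K →+* K) := ⟨σ.symm.surjective⟩
  set p := tauRel K M δ n with hp
  have hσδ' : ∀ i a, σ.symm (δ i a) = δ i (σ.symm a) := by
    intro i a
    have := hσδ i (σ.symm a)
    rw [RingEquiv.apply_symm_apply] at this
    rw [← this, RingEquiv.symm_apply_apply]
  have hσM' : ∀ (a : K) (m : M), σM.symm (a • m) = σ.symm a • σM.symm m := by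
    intro a m
    have := hσM (σ.symm a) (σM.symm m)
    rw [RingEquiv.apply_symm_apply, AddEquiv.apply_symm_apply] at this
    rw [← this, AddEquiv.symm_apply_apply]
  set Xq := Submodule.mapQ p p (shiftMap n) (shiftMap_mem δ n) with hXq
  set Sq := Submodule.mapQ p p (semiLin σ σM) (semiLin_mem δ σ hσδ σM hσM n) with hSq
  set Sq' := Submodule.mapQ p p (semiLin σ.symm σM.symm)
    (semiLin_mem δ σ.symm hσδ' σM.symm hσM' n) with hSq'
  have li : Function.LeftInverse Sq' Sq := by
    intro v
    obtain ⟨w, rfl⟩ := Submodule.Quotient.mk_surjective p v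
    rw [hSq, hSq', Submodule.mapQ_apply, Submodule.mapQ_apply]
    exact congrArg _ (semiMap_symm_comp σ σM w)
  have ri : Function.RightInverse Sq' Sq := by
    intro v
    obtain ⟨w, rfl⟩ := Submodule.Quotient.mk_surjective p v
    rw [hSq, hSq', Submodule.mapQ_apply, Submodule.mapQ_apply]
    have h2 : ∀ w, semiMap σ σM (semiMap σ.symm σM.symm w) = w := by
      intro w
      have h := semiMap_symm_comp σ.symm σM.symm (M := M) w
      simpa using h
    exact congrArg _ (h2 w)
  set S : (((ℕ × M) →₀ K) ⧸ p) ≃+ (((ℕ × M) →₀ K) ⧸ p) :=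
    { toFun := Sq, invFun := Sq', left_inv := li, right_inv := ri,
      map_add' := map_add Sq } with hS
  have hSap : ∀ v, S v = Sq v := fun _ => rfl
  refine ⟨Xq, S, ?_, ?_, ?_, ?_, ?_, ?_⟩
  · intro m
    rw [tauGen, hXq, Submodule.mapQ_apply, shiftMap_single, if_pos (Or.inl rfl)]
    exact (Submodule.Quotient.mk_eq_zero p).2 (Submodule.zero_mem p)
  · intro i hi m
    rw [tauGen, hXq, Submodule.mapQ_apply, shiftMap_single, if_neg (by omega)]
    rfl
  · have key : ∀ (k i : ℕ), i < k → ∀ (m : M) (c : K),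
        ((shiftMap n (M := M) (K := K)) ^ k) (single (i, m) c) = 0 := by
      intro k
      induction k with
      | zero => omega
      | succ k ih =>
          intro i hi m c
          rw [pow_succ, Module.End.mul_apply, shiftMap_single]
          split_ifs with h
          · exact map_zero _
          · push_neg at h
            exact ih (i - 1) (by omega) m c
    have hz : (shiftMap n (M := M) (K := K)) ^ (n + 1) = 0 := by
      apply Finsupp.lhom_ext
      intro a c
      obtain ⟨i, m⟩ := a
      rcases le_or_gt i n with hle | hlt
      · rw [key (n + 1) i (by omega) m c]; rfl
      · rw [pow_succ, Module.End.mul_apply, shiftMap_single, if_pos (Or.inr hlt), map_zero]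
        rfl
    have hq : ∀ (k : ℕ) (w : (ℕ × M) →₀ K),
        (Xq ^ k) (Submodule.Quotient.mk w)
        = Submodule.Quotient.mk (((shiftMap n (M := M) (K := K)) ^ k) w) := by
      intro k
      induction k with
      | zero => intro w; rfl
      | succ k ih =>
          intro w
          rw [pow_succ, Module.End.mul_apply, hXq, Submodule.mapQ_apply, ih,
            pow_succ, Module.End.mul_apply]
    refine LinearMap.ext fun v => ?_
    obtain ⟨w, rfl⟩ := Submodule.Quotient.mk_surjective p v
    rw [LinearMap.zero_apply, hq, hz]
    rfl
  · intro i m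
    rw [tauGen, hSap, hSq, Submodule.mapQ_apply]
    have h1 : semiLin σ σM (single (i, m) (1 : K)) = single (i, σM m) (1 : K) := by
      show semiMap σ σM _ = _
      rw [semiMap_single, map_one]
    rw [h1]
    rfl
  · intro a v
    rw [hSap, hSap]
    exact Sq.map_smulₛₗ a v
  · intro v
    obtain ⟨w, rfl⟩ := Submodule.Quotient.mk_surjective p v
    rw [hSap, hSap, hXq, hSq, Submodule.mapQ_apply, Submodule.mapQ_apply,
      Submodule.mapQ_apply, Submodule.mapQ_apply]
    exact congrArg _ (semiMap_shiftMap_comm σ σM n w)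
end

section
/- With notation as in the previous statement, the E_k-module τ_k M is injective over E_k = k[x]/(x^{k+1}); equivalently, every element of τ_k M annihilated by x^l lies in the image of multiplication by x^{k+1−l}. -/
open Finsupp

namespace Tau14

variable {K M : Type*} [Field K] [AddCommGroup M] [Module K M]
variable (δ : ℕ → K → K) (n : ℕ) {ι : Type*} (b : Module.Basis ι K M)

lemma mk_single (i : ℕ) (m : M) (c : K) :
    (Submodule.Quotient.mk (Finsupp.single ((i, m) : ℕ × M) c) :
      ((ℕ × M) →₀ K) ⧸ tauRel K M δ n) = c • tauGen K M δ n i m := by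
  rw [tauGen, ← Submodule.Quotient.mk_smul, Finsupp.smul_single', mul_one]

lemma genAdd {i : ℕ} (hi : i ≤ n) (m₁ m₂ : M) :
    tauGen K M δ n i (m₁ + m₂) = tauGen K M δ n i m₁ + tauGen K M δ n i m₂ := by
  have h : (Submodule.Quotient.mk (Finsupp.single ((i, m₁ + m₂) : ℕ × M) (1:K) -
      Finsupp.single (i, m₁) 1 - Finsupp.single (i, m₂) 1) :
      ((ℕ × M) →₀ K) ⧸ tauRel K M δ n) = 0 := by
    rw [Submodule.Quotient.mk_eq_zero]
    exact Submodule.subset_span (Or.inl (Or.inl ⟨i, m₁, m₂, hi, rfl⟩))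
  rw [Submodule.Quotient.mk_sub, Submodule.Quotient.mk_sub, sub_sub, sub_eq_zero] at h
  rw [tauGen, h]; rfl

lemma genHigh {i : ℕ} (hi : n < i) (m : M) : tauGen K M δ n i m = 0 := by
  rw [tauGen, Submodule.Quotient.mk_eq_zero]
  exact Submodule.subset_span (Or.inr ⟨i, m, hi, rfl⟩)

lemma genZero (i : ℕ) : tauGen K M δ n i (0 : M) = 0 := by
  rcases le_or_gt i n with hi | hi
  · have := genAdd δ n hi (0 : M) 0
    rw [add_zero] at this
    exact (left_eq_add.mp this)
  · exact genHigh δ n hi 0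

lemma genSmul {i : ℕ} (hi : i ≤ n) (a : K) (m : M) :
    tauGen K M δ n i (a • m) =
      ∑ j ∈ Finset.range (i + 1), δ j a • tauGen K M δ n (i - j) m := by
  have h : (Submodule.Quotient.mk (Finsupp.single ((i, a • m) : ℕ × M) (1:K) -
      ∑ j ∈ Finset.range (i + 1), Finsupp.single (i - j, m) (δ j a)) :
      ((ℕ × M) →₀ K) ⧸ tauRel K M δ n) = 0 := by
    rw [Submodule.Quotient.mk_eq_zero]
    exact Submodule.subset_span (Or.inl (Or.inr ⟨i, a, m, hi, rfl⟩))
  rw [Submodule.Quotient.mk_sub, sub_eq_zero] at h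
  rw [tauGen, h]
  rw [show (Submodule.Quotient.mk : ((ℕ × M) →₀ K) → _) = ⇑((tauRel K M δ n).mkQ) from rfl,
    map_sum]
  exact Finset.sum_congr rfl fun j _ => mk_single δ n _ m (δ j a)

lemma gen_finset_sum {i : ℕ} (hi : i ≤ n) {A : Type*} (s : Finset A) (g : A → M) :
    tauGen K M δ n i (∑ a ∈ s, g a) = ∑ a ∈ s, tauGen K M δ n i (g a) := by
  classical
  induction s using Finset.induction_on with
  | empty => simpa using genZero δ n i
  | insert _ _ hx ih =>
      rw [Finset.sum_insert hx, Finset.sum_insert hx, genAdd δ n hi, ih]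

end Tau14

namespace Tau14

variable {K M : Type*} [Field K] [AddCommGroup M] [Module K M]
variable (δ : ℕ → K → K) (n : ℕ) {ι : Type*} (b : Module.Basis ι K M)


/-- coordinate at level `t` of the generator. -/
noncomputable def D (t : ℕ) (p : ℕ × M) : M :=
  if t ≤ p.1 ∧ p.1 ≤ n then (b.repr p.2).sum (fun α c => δ (p.1 - t) c • b α) else 0

noncomputable def Phi (t : ℕ) : ((ℕ × M) →₀ K) →ₗ[K] M :=
  Finsupp.lsum K fun p => LinearMap.toSpanSingleton K M (D δ n b t p)

lemma Phi_single (t : ℕ) (p : ℕ × M) (c : K) :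
    Phi δ n b t (Finsupp.single p c) = c • D δ n b t p := by
  simp [Phi, LinearMap.toSpanSingleton, Finsupp.sum_single_index]

lemma rel_le_ker (hadd : ∀ i a b, δ i (a + b) = δ i a + δ i b)
    (hmul : ∀ i a b, δ i (a * b) = ∑ j ∈ Finset.range (i + 1), δ j a * δ (i - j) b)
    (t : ℕ) : tauRel K M δ n ≤ LinearMap.ker (Phi δ n b t) := by
  have hδ0 : ∀ j, δ j (0 : K) = 0 := fun j => by
    have h := hadd j 0 0
    rw [add_zero] at h
    exact (left_eq_add.mp h)
  rw [tauRel, Submodule.span_le]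
  rintro v hv
  simp only [Set.mem_union, Set.mem_setOf_eq] at hv
  rw [SetLike.mem_coe, LinearMap.mem_ker]
  obtain (⟨i, m₁, m₂, hi, rfl⟩ | ⟨i, a, m, hi, rfl⟩) | ⟨i, m, hi, rfl⟩ := hv
  · rw [map_sub, map_sub, Phi_single, Phi_single, Phi_single, one_smul, one_smul, one_smul]
    have h : D δ n b t (i, m₁ + m₂) = D δ n b t (i, m₁) + D δ n b t (i, m₂) := by
      unfold D
      dsimp only
      split_ifs with h
      · rw [map_add]
        exact Finsupp.sum_add_index' (fun α => by rw [hδ0, zero_smul])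
          (fun α c₁ c₂ => by rw [hadd, add_smul])
      · rw [add_zero]
    rw [h]; abel
  · rw [map_sub, map_sum, Phi_single, one_smul, sub_eq_zero]
    have hPs : ∀ j, Phi δ n b t (Finsupp.single ((i - j, m) : ℕ × M) (δ j a)) =
        δ j a • D δ n b t (i - j, m) := fun j => Phi_single δ n b t _ _
    simp only [hPs]
    by_cases ht : t ≤ i
    · have hL : D δ n b t (i, a • m) =
          (b.repr m).sum fun α c =>
            ∑ j ∈ Finset.range (i - t + 1), (δ j a * δ (i - t - j) c) • b α := by
        unfold D
        dsimp only
        rw [if_pos ⟨ht, hi⟩, map_smul]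
        rw [Finsupp.sum_smul_index (fun α => by rw [hδ0, zero_smul])]
        exact Finsupp.sum_congr fun α _ => by rw [hmul, Finset.sum_smul]
      have hR1 : ∀ j ∈ Finset.range (i - t + 1),
          ((b.repr m).sum fun α c => (δ j a * δ (i - t - j) c) • b α) =
            δ j a • D δ n b t (i - j, m) := by
        intro j hj
        rw [Finset.mem_range] at hj
        unfold D
        dsimp only
        rw [if_pos ⟨by omega, by omega⟩, Finsupp.smul_sum]
        have hij : i - j - t = i - t - j := by omega
        rw [hij]
        exact Finsupp.sum_congr fun α _ => by rw [mul_smul]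
      have hR0 : ∀ j ∈ Finset.range (i + 1), j ∉ Finset.range (i - t + 1) →
          δ j a • D δ n b t (i - j, m) = 0 := by
        intro j hj hj'
        rw [Finset.mem_range] at hj hj'
        unfold D
        dsimp only
        rw [if_neg (by omega), smul_zero]
      calc D δ n b t (i, a • m)
          = (b.repr m).sum fun α c =>
              ∑ j ∈ Finset.range (i - t + 1), (δ j a * δ (i - t - j) c) • b α := hL
        _ = ∑ j ∈ Finset.range (i - t + 1),
              (b.repr m).sum fun α c => (δ j a * δ (i - t - j) c) • b α := by
              simp only [Finsupp.sum]
              exact Finset.sum_comm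
        _ = ∑ j ∈ Finset.range (i - t + 1), δ j a • D δ n b t (i - j, m) :=
              Finset.sum_congr rfl hR1
        _ = ∑ j ∈ Finset.range (i + 1), δ j a • D δ n b t (i - j, m) :=
              Finset.sum_subset (Finset.range_subset_range.mpr (by omega)) hR0
    · have hL : D δ n b t (i, a • m) = 0 := by
        unfold D; dsimp only; rw [if_neg (by omega)]
      rw [hL]
      symm
      refine Finset.sum_eq_zero fun j hj => ?_
      rw [Finset.mem_range] at hj
      unfold D
      dsimp only
      rw [if_neg (by omega), smul_zero]
  · rw [Phi_single, one_smul]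
    unfold D
    dsimp only
    rw [if_neg (by omega)]

end Tau14

namespace Tau14

variable {K M : Type*} [Field K] [AddCommGroup M] [Module K M]
variable (δ : ℕ → K → K) (n : ℕ) {ι : Type*} (b : Module.Basis ι K M)

noncomputable def Phibar (hadd : ∀ i a b, δ i (a + b) = δ i a + δ i b)
    (hmul : ∀ i a b, δ i (a * b) = ∑ j ∈ Finset.range (i + 1), δ j a * δ (i - j) b)
    (t : ℕ) : (((ℕ × M) →₀ K) ⧸ tauRel K M δ n) →ₗ[K] M :=
  (tauRel K M δ n).liftQ (Phi δ n b t) (rel_le_ker δ n b hadd hmul t)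

lemma Phibar_gen (hadd : ∀ i a b, δ i (a + b) = δ i a + δ i b)
    (hmul : ∀ i a b, δ i (a * b) = ∑ j ∈ Finset.range (i + 1), δ j a * δ (i - j) b)
    (t i : ℕ) (m : M) :
    Phibar δ n b hadd hmul t (tauGen K M δ n i m) = D δ n b t (i, m) := by
  rw [tauGen, Phibar, Submodule.liftQ_apply, Phi_single, one_smul]

noncomputable def Gamma (t : ℕ) : M →ₗ[K] (((ℕ × M) →₀ K) ⧸ tauRel K M δ n) :=
  (((tauRel K M δ n).mkQ.comp
    (Finsupp.lsum K fun α => Finsupp.lsingle ((t, b α) : ℕ × M))).comp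
    b.repr.toLinearMap)

lemma Gamma_apply (t : ℕ) (m : M) :
    Gamma δ n b t m = (b.repr m).sum fun α c => c • tauGen K M δ n t (b α) := by
  rw [Gamma, LinearMap.comp_apply, LinearMap.comp_apply, LinearEquiv.coe_toLinearMap,
    Finsupp.lsum_apply, map_finsuppSum]
  exact Finsupp.sum_congr fun α _ => by
    rw [Finsupp.lsingle_apply, Submodule.mkQ_apply, mk_single]

lemma Gamma_basis (t : ℕ) (α : ι) :
    Gamma δ n b t (b α) = tauGen K M δ n t (b α) := by
  rw [Gamma_apply, Module.Basis.repr_self,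
    Finsupp.sum_single_index (by rw [zero_smul]), one_smul]

lemma theta_gen (hadd : ∀ i a b, δ i (a + b) = δ i a + δ i b)
    (hmul : ∀ i a b, δ i (a * b) = ∑ j ∈ Finset.range (i + 1), δ j a * δ (i - j) b)
    (i : ℕ) (m : M) :
    ∑ t ∈ Finset.range (n + 1),
      Gamma δ n b t (Phibar δ n b hadd hmul t (tauGen K M δ n i m)) =
        tauGen K M δ n i m := by
  rcases lt_or_ge n i with hi | hi
  · rw [genHigh δ n hi]
    exact Finset.sum_eq_zero fun t _ => by rw [map_zero, map_zero]
  · simp only [Phibar_gen]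
    have hstep : ∀ t ∈ Finset.range (i + 1),
        Gamma δ n b t (D δ n b t (i, m)) =
          (b.repr m).sum fun α c => δ (i - t) c • tauGen K M δ n t (b α) := by
      intro t ht
      rw [Finset.mem_range] at ht
      unfold D
      dsimp only
      rw [if_pos ⟨by omega, hi⟩, map_finsuppSum]
      exact Finsupp.sum_congr fun α _ => by rw [map_smul, Gamma_basis]
    have hzero : ∀ t ∈ Finset.range (n + 1), t ∉ Finset.range (i + 1) →
        Gamma δ n b t (D δ n b t (i, m)) = 0 := by
      intro t _ ht
      rw [Finset.mem_range] at ht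
      unfold D
      dsimp only
      rw [if_neg (by omega), map_zero]
    rw [← Finset.sum_subset (Finset.range_subset_range.mpr (by omega)) hzero,
      Finset.sum_congr rfl hstep]
    have hm : tauGen K M δ n i m =
        ∑ j ∈ Finset.range (i + 1),
          (b.repr m).sum fun α c => δ j c • tauGen K M δ n (i - j) (b α) := by
      conv_lhs => rw [← b.linearCombination_repr m, Finsupp.linearCombination_apply,
        Finsupp.sum]
      rw [gen_finset_sum δ n hi]
      rw [Finset.sum_congr rfl (fun α _ => genSmul δ n hi (b.repr m α) (b α))]
      rw [Finset.sum_comm]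
      exact Finset.sum_congr rfl fun j _ => by rw [Finsupp.sum]
    rw [hm]
    conv_rhs => rw [← Finset.sum_range_reflect
      (fun j => (b.repr m).sum fun α c => δ j c • tauGen K M δ n (i - j) (b α)) (i + 1)]
    refine Finset.sum_congr rfl fun t ht => ?_
    rw [Finset.mem_range] at ht
    have h1 : i + 1 - 1 - t = i - t := by omega
    have h2 : i - (i - t) = t := by omega
    rw [h1, h2]

lemma theta_id (hadd : ∀ i a b, δ i (a + b) = δ i a + δ i b)
    (hmul : ∀ i a b, δ i (a * b) = ∑ j ∈ Finset.range (i + 1), δ j a * δ (i - j) b)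
    (v : ((ℕ × M) →₀ K) ⧸ tauRel K M δ n) :
    ∑ t ∈ Finset.range (n + 1), Gamma δ n b t (Phibar δ n b hadd hmul t v) = v := by
  have key : (∑ t ∈ Finset.range (n + 1),
      (Gamma δ n b t).comp (Phibar δ n b hadd hmul t)) = LinearMap.id := by
    apply Submodule.linearMap_qext
    apply Finsupp.lhom_ext
    intro p c
    obtain ⟨i, m⟩ := p
    have hmk : ((tauRel K M δ n).mkQ) (Finsupp.single ((i, m) : ℕ × M) c) =
        c • tauGen K M δ n i m := by
      rw [Submodule.mkQ_apply]; exact mk_single δ n i m c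
    rw [LinearMap.comp_apply, LinearMap.comp_apply, hmk, LinearMap.id_apply, map_smul]
    simp only [LinearMap.sum_apply, LinearMap.comp_apply]
    rw [theta_gen δ n b hadd hmul i m]
  have h2 : (∑ t ∈ Finset.range (n + 1),
      (Gamma δ n b t).comp (Phibar δ n b hadd hmul t)) v = v := by
    rw [key]; rfl
  simpa only [LinearMap.sum_apply, LinearMap.comp_apply] using h2

end Tau14


/-- With notation as in the previous statement, the `E_n`-module `τ_n M`
(with `x` acting by `X : ∂_i m ↦ ∂_{i-1} m`) is injective over `E_n = K[x]/(x^{n+1})`: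
every element annihilated by `x^l` lies in the image of multiplication by `x^{n+1-l}`. -/
theorem tau_injective_module
    (K M : Type*) [Field K] [AddCommGroup M] [Module K M] [FiniteDimensional K M]
    (δ : ℕ → K → K)
    (h0 : ∀ a, δ 0 a = a)
    (hadd : ∀ i a b, δ i (a + b) = δ i a + δ i b)
    (hmul : ∀ i a b, δ i (a * b) = ∑ j ∈ Finset.range (i + 1), δ j a * δ (i - j) b)
    (hiter : ∀ i j a, δ i (δ j a) = ((i + j).choose i : K) * δ (i + j) a)
    (σ : K ≃+* K) (hσδ : ∀ i a, σ (δ i a) = δ i (σ a))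
    (σM : M ≃+ M) (hσM : ∀ (a : K) (m : M), σM (a • m) = σ a • σM m)
    (n : ℕ)
    (X : Module.End K (((ℕ × M) →₀ K) ⧸ tauRel K M δ n))
    (hX0 : ∀ m : M, X (tauGen K M δ n 0 m) = 0)
    (hXsucc : ∀ i : ℕ, i < n → ∀ m : M, X (tauGen K M δ n (i + 1) m) = tauGen K M δ n i m) :
    ∀ l : ℕ, l ≤ n + 1 →
      ∀ v : ((ℕ × M) →₀ K) ⧸ tauRel K M δ n,
        (X ^ l) v = 0 → ∃ w, (X ^ (n + 1 - l)) w = v := by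
  classical
  intro l hl v hv
  set b := Module.Basis.ofVectorSpace K M with hb
  -- `Phibar (t+1) = Phibar t ∘ X`
  have hPX : ∀ t : ℕ, Tau14.Phibar δ n b hadd hmul (t + 1) =
      (Tau14.Phibar δ n b hadd hmul t).comp X := by
    intro t
    apply Submodule.linearMap_qext
    apply Finsupp.lhom_ext
    intro p c
    obtain ⟨i, m⟩ := p
    have hmk : ((tauRel K M δ n).mkQ) (Finsupp.single ((i, m) : ℕ × M) c) =
        c • tauGen K M δ n i m := by
      rw [Submodule.mkQ_apply]; exact Tau14.mk_single δ n i m c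
    rw [LinearMap.comp_apply, LinearMap.comp_apply, LinearMap.comp_apply, hmk,
      map_smul, map_smul, map_smul]
    congr 1
    cases i with
    | zero =>
        rw [hX0, map_zero, Tau14.Phibar_gen]
        unfold Tau14.D
        dsimp only
        rw [if_neg (by omega)]
    | succ i' =>
        rcases le_or_gt (i' + 1) n with h | h
        · rw [hXsucc i' (by omega), Tau14.Phibar_gen, Tau14.Phibar_gen]
          unfold Tau14.D
          dsimp only
          have e : i' + 1 - (t + 1) = i' - t := by omega
          rw [e]
          by_cases hc : t ≤ i'
          · rw [if_pos ⟨by omega, h⟩, if_pos ⟨hc, by omega⟩]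
          · rw [if_neg (by omega), if_neg (by omega)]
        · rw [Tau14.genHigh δ n h, map_zero, map_zero, map_zero]
  have hPXpow : ∀ s t : ℕ, Tau14.Phibar δ n b hadd hmul (t + s) =
      (Tau14.Phibar δ n b hadd hmul t).comp (X ^ s) := by
    intro s
    induction s with
    | zero =>
        intro t
        rw [Nat.add_zero, pow_zero, Module.End.one_eq_id, LinearMap.comp_id]
    | succ s ih =>
        intro t
        rw [show t + (s + 1) = (t + s) + 1 from by omega, hPX (t + s), ih t,
          LinearMap.comp_assoc, ← Module.End.mul_eq_comp, ← pow_succ]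
  have hvan : ∀ t : ℕ, l ≤ t → Tau14.Phibar δ n b hadd hmul t v = 0 := by
    intro t ht
    rw [show t = (t - l) + l from by omega, hPXpow l (t - l), LinearMap.comp_apply, hv,
      map_zero]
  have hXG : ∀ (u : ℕ) (m : M), u + 1 ≤ n →
      X (Tau14.Gamma δ n b (u + 1) m) = Tau14.Gamma δ n b u m := by
    intro u m hu
    rw [Tau14.Gamma_apply, Tau14.Gamma_apply, map_finsuppSum]
    exact Finsupp.sum_congr fun α _ => by rw [map_smul, hXsucc u (by omega)]
  have hXGpow : ∀ (s u : ℕ) (m : M), u + s ≤ n →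
      (X ^ s) (Tau14.Gamma δ n b (u + s) m) = Tau14.Gamma δ n b u m := by
    intro s
    induction s with
    | zero => intro u m _; simp
    | succ s ih =>
        intro u m hu
        rw [show u + (s + 1) = (u + s) + 1 from by omega, pow_succ, Module.End.mul_apply,
          hXG (u + s) m (by omega), ih u m (by omega)]
  refine ⟨∑ t ∈ Finset.range l,
    Tau14.Gamma δ n b (t + (n + 1 - l)) (Tau14.Phibar δ n b hadd hmul t v), ?_⟩
  rw [map_sum]
  have hterm : ∀ t ∈ Finset.range l,
      (X ^ (n + 1 - l)) (Tau14.Gamma δ n b (t + (n + 1 - l))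
        (Tau14.Phibar δ n b hadd hmul t v)) =
      Tau14.Gamma δ n b t (Tau14.Phibar δ n b hadd hmul t v) := by
    intro t ht
    rw [Finset.mem_range] at ht
    exact hXGpow (n + 1 - l) t _ (by omega)
  rw [Finset.sum_congr rfl hterm]
  calc ∑ t ∈ Finset.range l, Tau14.Gamma δ n b t (Tau14.Phibar δ n b hadd hmul t v)
      = ∑ t ∈ Finset.range (n + 1),
          Tau14.Gamma δ n b t (Tau14.Phibar δ n b hadd hmul t v) :=
        Finset.sum_subset (Finset.range_subset_range.mpr hl) (fun t _ ht' => by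
          rw [hvan t (by rwa [Finset.mem_range, not_lt] at ht'), map_zero])
    _ = v := Tau14.theta_id δ n b hadd hmul v
end

section
/- Let k be a field and E a finite-dimensional commutative k-algebra whose reduction E_red = E/nil(E) is a separable (étale) k-algebra. Let A be any finite-dimensional associative k-algebra, S a simple E-module, and T a simple A-module. Then S ⊗_k T is a semisimple module over E ⊗_k A. -/
open TensorProduct

section RightAction

variable (k : Type*) [CommSemiring k] {A : Type*} [Semiring A] [Algebra k A]
variable {S : Type*} [AddCommMonoid S] [Module k S]
variable {T : Type*} [AddCommMonoid T] [Module k T] [Module A T] [IsScalarTower k A T]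

/-- The action of `a : A` on `T` as a `k`-linear map. -/
noncomputable def actionMap (a : A) : T →ₗ[k] T :=
  { toFun := fun t => a • t
    map_add' := fun x y => smul_add a x y
    map_smul' := fun c t => by
      simp only [RingHom.id_apply]
      rw [← algebraMap_smul A c t, smul_smul, ← Algebra.commutes, ← smul_smul,
        algebraMap_smul] }

/-- The action of `A` on the second factor of `S ⊗[k] T`. -/
noncomputable instance (priority := 50) rightFactorModule : Module A (S ⊗[k] T) where
  smul a := LinearMap.lTensor S (actionMap k a)
  one_smul x := by
    have h : actionMap k (1 : A) = (LinearMap.id : T →ₗ[k] T) := by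
      ext t; exact one_smul A t
    show LinearMap.lTensor S (actionMap k (1 : A)) x = x
    rw [h, LinearMap.lTensor_id]; rfl
  mul_smul a b x := by
    have h : actionMap k (a * b) =
        (actionMap k a : T →ₗ[k] T).comp (actionMap k b : T →ₗ[k] T) := by
      ext t; exact mul_smul a b t
    show LinearMap.lTensor S (actionMap k (a * b)) x =
      LinearMap.lTensor S (actionMap k a) (LinearMap.lTensor S (actionMap k b) x)
    rw [h, LinearMap.lTensor_comp]; rfl
  smul_zero a := map_zero _
  smul_add a x y := map_add _ x y
  add_smul a b x := by
    have h : actionMap k (a + b) =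
        (actionMap k a : T →ₗ[k] T) + (actionMap k b : T →ₗ[k] T) := by
      ext t; exact add_smul a b t
    show LinearMap.lTensor S (actionMap k (a + b)) x =
      LinearMap.lTensor S (actionMap k a) x + LinearMap.lTensor S (actionMap k b) x
    rw [h, LinearMap.lTensor_add]; rfl
  zero_smul x := by
    have h : actionMap k (0 : A) = (0 : T →ₗ[k] T) := by
      ext t; exact zero_smul A t
    show LinearMap.lTensor S (actionMap k (0 : A)) x = 0
    rw [h, LinearMap.lTensor_zero]; rfl

end RightAction

section Instances

variable (k : Type*) [CommSemiring k]
variable {E : Type*} [CommSemiring E] [Algebra k E]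
variable {A : Type*} [Semiring A] [Algebra k A]
variable {S : Type*} [AddCommMonoid S] [Module k S] [Module E S] [IsScalarTower k E S]
variable {T : Type*} [AddCommMonoid T] [Module k T] [Module A T] [IsScalarTower k A T]

noncomputable instance (priority := 2000) : IsScalarTower k A (S ⊗[k] T) where
  smul_assoc c a x := by
    have h : actionMap k ((c • a : A)) = c • (actionMap k a : T →ₗ[k] T) := by
      ext t; exact smul_assoc c a t
    show LinearMap.lTensor S (actionMap k (c • a)) x = c • LinearMap.lTensor S (actionMap k a) x
    rw [h, LinearMap.lTensor_smul]; rfl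

noncomputable instance (priority := 2000) : IsScalarTower k E (S ⊗[k] T) where
  smul_assoc c e x := by
    induction x using TensorProduct.induction_on with
    | zero => simp
    | tmul s t =>
        rw [TensorProduct.smul_tmul', TensorProduct.smul_tmul', TensorProduct.smul_tmul',
          smul_assoc]
    | add x y hx hy => rw [smul_add, smul_add, smul_add, hx, hy]

noncomputable instance (priority := 2000) : SMulCommClass E A (S ⊗[k] T) where
  smul_comm e a x := by
    show e • LinearMap.lTensor S (actionMap k a) x = LinearMap.lTensor S (actionMap k a) (e • x)
    induction x using TensorProduct.induction_on with
    | zero => simp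
    | tmul s t =>
        rw [LinearMap.lTensor_tmul, TensorProduct.smul_tmul', TensorProduct.smul_tmul',
          LinearMap.lTensor_tmul]
    | add x y hx hy => rw [map_add, smul_add, smul_add, map_add, hx, hy]

/-- The canonical `E ⊗[k] A`-module structure on `S ⊗[k] T`, for `S` an `E`-module and
`T` an `A`-module. -/
noncomputable instance (priority := 50) tensorTensorModule : Module (E ⊗[k] A) (S ⊗[k] T) :=
  TensorProduct.Algebra.module (R := k) (A := E) (B := A) (M := S ⊗[k] T)

end Instances

section MaschkeAux

open TensorProduct in
/-- Maschke-type averaging: if `M` carries commuting actions of a commutative `k`-algebra `Q`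
and a `k`-algebra `A`, the `Q ⊗ A` action is the product action, `M` is semisimple over `A`,
and `Q` admits a separability element `t`, then `M` is semisimple over `Q ⊗[k] A`. -/
theorem maschke_semisimple {k : Type*} [Field k] {Q A M : Type*}
    [CommRing Q] [Algebra k Q] [Ring A] [Algebra k A]
    [AddCommGroup M] [Module k M] [Module Q M] [Module A M]
    [IsScalarTower k Q M] [IsScalarTower k A M] [SMulCommClass Q A M]
    [Module (Q ⊗[k] A) M]
    (hc : ∀ (x : Q) (a : A) (m : M), (x ⊗ₜ[k] a) • m = x • a • m)
    [IsSemisimpleModule A M]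
    (t : Q ⊗[k] Q)
    (ht1 : ∀ s : Q, ((1 : Q) ⊗ₜ[k] s - s ⊗ₜ[k] (1 : Q)) * t = 0)
    (ht2 : Algebra.TensorProduct.lmul' k t = 1) :
    IsSemisimpleModule (Q ⊗[k] A) M := by
  refine { exists_isCompl := ?_ }
  intro N
  have hQs : ∀ (x : Q) {m : M}, m ∈ N → x • m ∈ N := by
    intro x m hm
    have := N.smul_mem (x ⊗ₜ[k] (1 : A)) hm
    rwa [hc, one_smul] at this
  have hAs : ∀ (a : A) {m : M}, m ∈ N → a • m ∈ N := by
    intro a m hm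
    have := N.smul_mem ((1 : Q) ⊗ₜ[k] a) hm
    rwa [hc, one_smul] at this
  let N' : Submodule A M :=
    { carrier := (N : Set M)
      add_mem' := fun h₁ h₂ => N.add_mem h₁ h₂
      zero_mem' := N.zero_mem
      smul_mem' := fun a m hm => hAs a hm }
  obtain ⟨C, hC⟩ := exists_isCompl N'
  let p : M →ₗ[A] M := N'.subtype ∘ₗ N'.linearProjOfIsCompl C hC
  have hp1 : ∀ m ∈ N, p m = m := by
    intro m hm
    have : N'.linearProjOfIsCompl C hC m = ⟨m, hm⟩ :=
      Submodule.linearProjOfIsCompl_apply_left hC ⟨m, hm⟩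
    simp only [p, LinearMap.comp_apply, this, Submodule.subtype_apply]
  have hp2 : ∀ m : M, p m ∈ N := fun m => (N'.linearProjOfIsCompl C hC m).2
  have hQk : ∀ (x : Q) (c : k) (m : M), x • c • m = c • x • m := by
    intro x c m
    rw [← algebraMap_smul Q c m, smul_smul, mul_comm, ← smul_smul, algebraMap_smul]
  let L : Q → M →ₗ[k] M := fun x =>
    { toFun := fun m => x • m
      map_add' := fun a b => smul_add x a b
      map_smul' := fun c m => by simpa using hQk x c m }
  let pk : M →ₗ[k] M := p.restrictScalars k
  have hpk : ∀ m, pk m = p m := fun _ => rfl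
  let bil : Q →ₗ[k] Q →ₗ[k] M →ₗ[k] M := LinearMap.mk₂ k
    (fun x y => (L x) ∘ₗ pk ∘ₗ (L y))
    (fun x₁ x₂ y => LinearMap.ext fun m => add_smul x₁ x₂ (pk (y • m)))
    (fun c x y => LinearMap.ext fun m => smul_assoc c x (pk (y • m)))
    (fun x y₁ y₂ => LinearMap.ext fun m => by
      show x • pk ((y₁ + y₂) • m) = x • pk (y₁ • m) + x • pk (y₂ • m)
      rw [add_smul, map_add, smul_add])
    (fun c x y => LinearMap.ext fun m => by
      show x • pk ((c • y) • m) = c • (x • pk (y • m))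
      rw [smul_assoc c y m, map_smul, hQk])
  let Φ : Q ⊗[k] Q →ₗ[k] M →ₗ[k] M := TensorProduct.lift bil
  have hΦ : ∀ (x y : Q) (m : M), Φ (x ⊗ₜ[k] y) m = x • p (y • m) := fun x y m => rfl
  have c1 : ∀ (z : Q ⊗[k] Q), ∀ m ∈ N, Φ z m = Algebra.TensorProduct.lmul' k z • m := by
    intro z m hm
    induction z using TensorProduct.induction_on with
    | zero => simp
    | tmul x y =>
        rw [hΦ, hp1 _ (hQs y hm), Algebra.TensorProduct.lmul'_apply_tmul, mul_smul]
    | add u v hu hv =>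
        rw [map_add, LinearMap.add_apply, hu, hv, map_add, add_smul]
  have c2 : ∀ (z : Q ⊗[k] Q) (m : M), Φ z m ∈ N := by
    intro z m
    induction z using TensorProduct.induction_on with
    | zero => simp only [map_zero, LinearMap.zero_apply]; exact N.zero_mem
    | tmul x y => rw [hΦ]; exact hQs x (hp2 _)
    | add u v hu hv => rw [map_add, LinearMap.add_apply]; exact N.add_mem hu hv
  have c3 : ∀ (z : Q ⊗[k] Q) (a : A) (m : M), Φ z (a • m) = a • Φ z m := by
    intro z a m
    induction z using TensorProduct.induction_on with
    | zero => simp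
    | tmul x y => rw [hΦ, hΦ, smul_comm y a m, p.map_smul, smul_comm]
    | add u v hu hv => rw [map_add, LinearMap.add_apply, LinearMap.add_apply, hu, hv, smul_add]
  have c4 : ∀ (z : Q ⊗[k] Q) (s : Q) (m : M), Φ ((s ⊗ₜ[k] (1 : Q)) * z) m = s • Φ z m := by
    intro z s m
    induction z using TensorProduct.induction_on with
    | zero => simp
    | tmul x y =>
        rw [Algebra.TensorProduct.tmul_mul_tmul, hΦ, hΦ, one_mul, mul_smul]
    | add u v hu hv =>
        rw [mul_add, map_add, LinearMap.add_apply, hu, hv, map_add, LinearMap.add_apply,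
          smul_add]
  have c5 : ∀ (z : Q ⊗[k] Q) (s : Q) (m : M), Φ (((1 : Q) ⊗ₜ[k] s) * z) m = Φ z (s • m) := by
    intro z s m
    induction z using TensorProduct.induction_on with
    | zero => simp
    | tmul x y =>
        rw [Algebra.TensorProduct.tmul_mul_tmul, hΦ, hΦ, one_mul, mul_comm s y, mul_smul]
    | add u v hu hv =>
        rw [mul_add, map_add, LinearMap.add_apply, hu, hv, map_add, LinearMap.add_apply]
  have hfix : ∀ m ∈ N, Φ t m = m := fun m hm => by rw [c1 t m hm, ht2, one_smul]
  have hQlin : ∀ (s : Q) (m : M), Φ t (s • m) = s • Φ t m := by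
    intro s m
    have h := ht1 s
    rw [sub_mul, sub_eq_zero] at h
    rw [← c5 t s m, h, c4]
  let qh : M →ₗ[Q ⊗[k] A] M :=
    { toFun := Φ t
      map_add' := (Φ t).map_add
      map_smul' := fun r m => by
        simp only [RingHom.id_apply]
        induction r using TensorProduct.induction_on with
        | zero => rw [zero_smul, zero_smul, map_zero]
        | tmul x a => rw [hc, hQlin, c3, ← hc]
        | add u v hu hv => rw [add_smul, add_smul, map_add, hu, hv] }
  have hqh : ∀ m, qh m = Φ t m := fun _ => rfl
  refine ⟨LinearMap.ker qh, disjoint_iff_inf_le.mpr ?_, codisjoint_iff_le_sup.mpr ?_⟩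
  · intro m hm
    obtain ⟨hm1, hm2⟩ := Submodule.mem_inf.mp hm
    have h0 : Φ t m = 0 := by rw [← hqh]; exact LinearMap.mem_ker.mp hm2
    rw [Submodule.mem_bot, ← hfix m hm1, h0]
  · intro m _
    have h1 : Φ t m ∈ N := c2 t m
    have h2 : m - Φ t m ∈ LinearMap.ker qh := by
      rw [LinearMap.mem_ker, hqh, map_sub, hfix _ h1, sub_self]
    exact Submodule.mem_sup.mpr ⟨Φ t m, h1, m - Φ t m, h2, by abel⟩

end MaschkeAux

section RightSS

open TensorProduct in
theorem rightFactor_isSemisimple (k : Type*) [Field k] {A : Type*} [Ring A] [Algebra k A]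
    {S : Type*} [AddCommGroup S] [Module k S]
    {T : Type*} [AddCommGroup T] [Module k T] [Module A T] [IsScalarTower k A T]
    [IsSimpleModule A T] :
    IsSemisimpleModule A (S ⊗[k] T) := by
  apply IsSemisimpleModule.of_sSup_simples_eq_top
  rw [eq_top_iff]
  intro x _
  have hmem : ∀ (s : S) (t : T),
      s ⊗ₜ[k] t ∈ sSup { m : Submodule A (S ⊗[k] T) | IsSimpleModule A m } := by
    intro s t
    let f : T →ₗ[A] S ⊗[k] T :=
      { toFun := fun t => s ⊗ₜ[k] t
        map_add' := fun a b => TensorProduct.tmul_add s a b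
        map_smul' := fun a t => by
          simp only [RingHom.id_apply]
          show s ⊗ₜ[k] (a • t) = LinearMap.lTensor S (actionMap k a) (s ⊗ₜ[k] t)
          rw [LinearMap.lTensor_tmul]
          rfl }
    by_cases hf : f = 0
    · have : s ⊗ₜ[k] t = 0 := by
        have := congrFun (congrArg DFunLike.coe hf) t
        exact this
      rw [this]; exact Submodule.zero_mem _
    · have hinj : Function.Injective f := LinearMap.injective_of_ne_zero hf
      have hsimple : IsSimpleModule A (LinearMap.range f) :=
        IsSimpleModule.congr (LinearEquiv.ofInjective f hinj).symm
      have hle : LinearMap.range f ≤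
          sSup { m : Submodule A (S ⊗[k] T) | IsSimpleModule A m } := le_sSup hsimple
      exact hle ⟨t, rfl⟩
  induction x using TensorProduct.induction_on with
  | zero => exact Submodule.zero_mem _
  | tmul s t => exact hmem s t
  | add u v hu hv => exact Submodule.add_mem _ (hu trivial) (hv trivial)

end RightSS

/-- Let `k` be a field, `E` a finite-dimensional commutative `k`-algebra whose
reduction `E/nil(E)` is separable (étale) over `k`, `A` any finite-dimensional associative
`k`-algebra, `S` a simple `E`-module, and `T` a simple `A`-module.  Then `S ⊗[k] T` is a
semisimple module over `E ⊗[k] A`. -/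
theorem tensor_of_simples_isSemisimple
    (k E A S T : Type u) [Field k]
    [CommRing E] [Algebra k E] [FiniteDimensional k E]
    (hsep : Algebra.Etale k (E ⧸ nilradical E))
    [Ring A] [Algebra k A] [FiniteDimensional k A]
    [AddCommGroup S] [Module k S] [Module E S] [IsScalarTower k E S] [IsSimpleModule E S]
    [AddCommGroup T] [Module k T] [Module A T] [IsScalarTower k A T] [IsSimpleModule A T] :
    IsSemisimpleModule (E ⊗[k] A) (S ⊗[k] T) := by
  classical
  -- the nilradical annihilates the simple module `S`
  have hM : Module.IsTorsionBySet E S (nilradical E) := by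
    intro x a
    have hmax := IsSimpleModule.annihilator_isMaximal (R := E) (M := S)
    haveI := hmax.isPrime
    have hle : nilradical E ≤ Module.annihilator E S := nilradical_le_prime _
    exact Module.mem_annihilator.mp (hle a.2) x
  letI : Module (E ⧸ nilradical E) S := hM.module
  haveI : IsScalarTower k (E ⧸ nilradical E) S := Module.IsTorsionBySet.isScalarTower hM
  have hmkS : ∀ (e : E) (s : S), (Ideal.Quotient.mk (nilradical E) e) • s = e • s :=
    fun e s => rfl
  have hES : ∀ (e : E) (c : k) (s : S), e • c • s = c • e • s := by
    intro e c s
    rw [← algebraMap_smul E c s, smul_smul, mul_comm, ← smul_smul, algebraMap_smul]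
  haveI : SMulCommClass k (E ⧸ nilradical E) S := by
    constructor
    intro c q s
    obtain ⟨e, rfl⟩ := Ideal.Quotient.mk_surjective q
    rw [hmkS, hmkS, hES]
  -- the separability element of `E ⧸ nilradical E`
  haveI : Module.Finite k (E ⧸ nilradical E) :=
    Module.Finite.of_surjective (Ideal.Quotient.mkₐ k (nilradical E)).toLinearMap
      (Ideal.Quotient.mkₐ_surjective k (nilradical E))
  haveI := hsep.formallyEtale
  obtain ⟨t, ht1, ht2⟩ := (Algebra.FormallyUnramified.iff_exists_tensorProduct
    (R := k) (S := E ⧸ nilradical E)).mp inferInstance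
  -- semisimplicity over `A`, then over `(E ⧸ nilradical E) ⊗ A` by Maschke-type averaging
  haveI : IsSemisimpleModule A (S ⊗[k] T) := rightFactor_isSemisimple k
  have hQss : IsSemisimpleModule ((E ⧸ nilradical E) ⊗[k] A) (S ⊗[k] T) :=
    maschke_semisimple (fun x a m => TensorProduct.Algebra.smul_def x a m) t ht1 ht2
  -- transfer along the surjection `E ⊗ A → (E ⧸ nilradical E) ⊗ A`
  let σ : (E ⊗[k] A) →+* ((E ⧸ nilradical E) ⊗[k] A) :=
    (Algebra.TensorProduct.map (Ideal.Quotient.mkₐ k (nilradical E)) (AlgHom.id k A)).toRingHom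
  have hσ : ∀ (e : E) (a : A),
      σ (e ⊗ₜ[k] a) = (Ideal.Quotient.mk (nilradical E) e) ⊗ₜ[k] a := by
    intro e a
    simp [σ, Algebra.TensorProduct.map_tmul]
  haveI : RingHomSurjective σ := by
    constructor
    intro z
    induction z using TensorProduct.induction_on with
    | zero => exact ⟨0, map_zero _⟩
    | tmul q a =>
        obtain ⟨e, rfl⟩ := Ideal.Quotient.mk_surjective q
        exact ⟨e ⊗ₜ[k] a, hσ e a⟩
    | add u v hu hv =>
        obtain ⟨x, rfl⟩ := hu
        obtain ⟨y, rfl⟩ := hv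
        exact ⟨x + y, map_add _ _ _⟩
  have hmkT : ∀ (e : E) (x : S ⊗[k] T), (Ideal.Quotient.mk (nilradical E) e) • x = e • x := by
    intro e x
    induction x using TensorProduct.induction_on with
    | zero => simp
    | tmul s t' =>
        rw [TensorProduct.smul_tmul', TensorProduct.smul_tmul', hmkS]
    | add u v hu hv => rw [smul_add, smul_add, hu, hv]
  let l : (S ⊗[k] T) →ₛₗ[σ] (S ⊗[k] T) :=
    { toFun := id
      map_add' := fun _ _ => rfl
      map_smul' := fun r m => by
        induction r using TensorProduct.induction_on with
        | zero => rw [zero_smul, map_zero]; exact (zero_smul (E ⊗[k] A) m).symm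
        | tmul e a =>
            show (e ⊗ₜ[k] a) • m = σ (e ⊗ₜ[k] a) • m
            rw [hσ, TensorProduct.Algebra.smul_def, TensorProduct.Algebra.smul_def, hmkT]
        | add u v hu hv =>
            show (u + v) • m = σ (u + v) • m
            rw [add_smul, map_add, add_smul]
            exact congrArg₂ (· + ·) hu hv }
  exact (l.isSemisimpleModule_iff_of_bijective Function.bijective_id).mpr hQss
end

section
/- Let R be a commutative ring, E an R-coalgebra which is finitely generated and projective as an R-module, with counit p : E → R. For n ≥ 1 let E_n ⊆ E^{⊗n} be the joint equalizer of the n maps E^{⊗n} → E^{⊗(n−1)} obtained by applying p in one tensor factor and the identity elsewhere (E₁ = E). Then for any R-coalgebra H with comultiplication c and any R-linear map t : H → E respecting counits, the map t_n = t^{⊗n} ∘ c^{(n−1)} : H → E^{⊗n} factors through E_n, where c^{(n−1)} : H → H^{⊗n} is the (n−1)-fold iterated comultiplication. -/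
open TensorProduct

universe u

variable (R : Type u) [CommRing R]
variable (E : Type u) [AddCommGroup E] [Module R E] [Coalgebra R E]

/-- The iterated tensor power `E^{⊗n}` of `E` over `R` (with `E^{⊗0} = R`),
packaged as a bundled `R`-module. -/
noncomputable def tensorPow : ℕ → ModuleCat R
  | 0 => ModuleCat.of R R
  | (n + 1) => ModuleCat.of R (E ⊗[R] (tensorPow n))

/-- The map `E^{⊗(n+1)} → E^{⊗n}` applying the counit `p` in the `i`-th tensor factor and
the identity elsewhere. -/
noncomputable def applyCounitAt : (n : ℕ) → Fin (n + 1) → (tensorPow R E (n + 1) →ₗ[R] tensorPow R E n)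
  | n, ⟨0, _⟩ =>
      (TensorProduct.lid R (tensorPow R E n)).toLinearMap ∘ₗ
        LinearMap.rTensor (tensorPow R E n) (Coalgebra.counit : E →ₗ[R] R)
  | (n + 1), ⟨i + 1, h⟩ =>
      LinearMap.lTensor E (applyCounitAt n ⟨i, by omega⟩)

/-- The joint equalizer `E_{n+1} ⊆ E^{⊗(n+1)}` of the `n+1` maps `E^{⊗(n+1)} → E^{⊗n}`
obtained by applying the counit in one tensor factor. -/
noncomputable def jointEqualizer (n : ℕ) : Submodule R (tensorPow R E (n + 1)) :=
  ⨅ (i : Fin (n + 1)) (j : Fin (n + 1)),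
    LinearMap.ker (applyCounitAt R E n i - applyCounitAt R E n j)

variable (H : Type u) [AddCommGroup H] [Module R H] [Coalgebra R H]

/-- For an `R`-linear map `t : H → E`, the iterated map
`t_n = t^{⊗n} ∘ c^{(n-1)} : H → E^{⊗n}` (with `t_0` the counit of `H`). -/
noncomputable def iteratedComul (t : H →ₗ[R] E) : (n : ℕ) → (H →ₗ[R] tensorPow R E n)
  | 0 => (Coalgebra.counit : H →ₗ[R] R)
  | (n + 1) => TensorProduct.map t (iteratedComul t n) ∘ₗ (Coalgebra.comul : H →ₗ[R] H ⊗[R] H)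

theorem applyCounitAt_comp_iteratedComul (t : H →ₗ[R] E)
    (ht : (Coalgebra.counit : E →ₗ[R] R) ∘ₗ t = (Coalgebra.counit : H →ₗ[R] R)) :
    ∀ (n : ℕ) (i : Fin (n + 1)),
      applyCounitAt R E n i ∘ₗ iteratedComul R E H t (n + 1) = iteratedComul R E H t n := by
  intro n
  induction n with
  | zero =>
    intro i
    fin_cases i
    show ((TensorProduct.lid R (tensorPow R E 0)).toLinearMap ∘ₗ
        LinearMap.rTensor _ Coalgebra.counit) ∘ₗ
        (TensorProduct.map t (iteratedComul R E H t 0) ∘ₗ Coalgebra.comul) = _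
    rw [LinearMap.comp_assoc, ← LinearMap.comp_assoc _ _ (LinearMap.rTensor _ _),
      LinearMap.rTensor_comp_map, ht, ← LinearMap.lTensor_comp_rTensor,
      LinearMap.comp_assoc, Coalgebra.rTensor_counit_comp_comul]
    ext h
    simp [iteratedComul]
    exact (TensorProduct.lid_tmul (Coalgebra.counit (R := R) h) (1 : R)).trans (one_smul R _)
  | succ m IH =>
    rintro ⟨i, hi⟩
    match i, hi with
    | 0, hi =>
      show ((TensorProduct.lid R (tensorPow R E (m+1))).toLinearMap ∘ₗ
          LinearMap.rTensor _ Coalgebra.counit) ∘ₗ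
          (TensorProduct.map t (iteratedComul R E H t (m+1)) ∘ₗ Coalgebra.comul) = _
      rw [LinearMap.comp_assoc, ← LinearMap.comp_assoc _ _ (LinearMap.rTensor _ _),
        LinearMap.rTensor_comp_map, ht, ← LinearMap.lTensor_comp_rTensor,
        LinearMap.comp_assoc, Coalgebra.rTensor_counit_comp_comul]
      ext h
      simp
    | j + 1, hi =>
      show LinearMap.lTensor E (applyCounitAt R E m ⟨j, by omega⟩) ∘ₗ
          (TensorProduct.map t (iteratedComul R E H t (m+1)) ∘ₗ Coalgebra.comul) = _
      rw [← LinearMap.comp_assoc, LinearMap.lTensor_comp_map, IH ⟨j, by omega⟩]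
      rfl

/-- Let `R` be a commutative ring, `E` an `R`-coalgebra which is finitely
generated and projective as an `R`-module, with counit `p`.  For `n ≥ 1` let
`E_n ⊆ E^{⊗n}` be the joint equalizer of the `n` maps `E^{⊗n} → E^{⊗(n-1)}` obtained by
applying `p` in one tensor factor and the identity elsewhere.  Then for any `R`-coalgebra
`H` and any `R`-linear map `t : H → E` respecting counits, the map
`t_n = t^{⊗n} ∘ c^{(n-1)} : H → E^{⊗n}` factors through `E_n`. -/
theorem iteratedComul_mem_jointEqualizer
    [Module.Finite R E] [Module.Projective R E]
    (t : H →ₗ[R] E)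
    (ht : (Coalgebra.counit : E →ₗ[R] R) ∘ₗ t = (Coalgebra.counit : H →ₗ[R] R)) :
    ∀ (n : ℕ) (h : H), iteratedComul R E H t (n + 1) h ∈ jointEqualizer R E n := by
  intro n h
  simp only [jointEqualizer, Submodule.mem_iInf, LinearMap.mem_ker]
  intro i j
  have hi := LinearMap.congr_fun (applyCounitAt_comp_iteratedComul R E H t ht n i) h
  have hj := LinearMap.congr_fun (applyCounitAt_comp_iteratedComul R E H t ht n j) h
  simp only [LinearMap.comp_apply] at hi hj
  simp [LinearMap.sub_apply, hi, hj]
end
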